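/- Let μ be a (C,α)-Ahlfors regular measure on ℝ (with the Ahlfors regularity inequalities holding for all radii ρ > 0). Then μ is absolutely (2^α C², α)-decaying on ℝ: for any open ball B ⊂ ℝ of radius r centred in supp μ, any point y ∈ ℝ, and any ε > 0, one has μ(B ∩ B(y,ε)) ≤ 2^α C² (ε/r)^α μ(B). -/

import Mathlib

open MeasureTheory Metric

/-- The (topological) support of a measure. -/
def msupp {X : Type*} [MetricSpace X] [MeasurableSpace X] (μ : Measure X) : Set X :=
  {x | ∀ r : ℝ, 0 < r → 0 < μ (ball x r)}

lemma msupp_compl_null (μ : Measure ℝ) : μ ((msupp μ)ᶜ) = 0 := by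
  refine measure_null_of_locally_null _ (fun z hz => ?_)
  simp only [Set.mem_compl_iff, msupp, Set.mem_setOf_eq, not_forall] at hz
  obtain ⟨r, hr, h0⟩ := hz
  exact ⟨ball z r, mem_nhdsWithin_of_mem_nhds (ball_mem_nhds z hr),
    le_antisymm (not_lt.1 h0) zero_le⟩

lemma ball_lower (μ : Measure ℝ) (C α : ℝ) (hC : 1 < C) (hα : 0 < α)
    (hAhlfors : ∀ x ∈ msupp μ, ∀ ρ : ℝ, 0 < ρ →
      ENNReal.ofReal (C⁻¹ * ρ ^ α) ≤ μ (closedBall x ρ) ∧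
      μ (closedBall x ρ) ≤ ENNReal.ofReal (C * ρ ^ α))
    (x : ℝ) (hx : x ∈ msupp μ) (r : ℝ) (hr : 0 < r) :
    ENNReal.ofReal (C⁻¹ * r ^ α) ≤ μ (ball x r) := by
  have hcont : ContinuousAt (fun ρ : ℝ => ENNReal.ofReal (C⁻¹ * ρ ^ α)) r :=
    ENNReal.continuous_ofReal.continuousAt.comp
      (continuousAt_const.mul (Real.continuousAt_rpow_const r α (Or.inl hr.ne')))
  refine le_of_tendsto (hcont.tendsto.mono_left (nhdsWithin_le_nhds (s := Set.Iio r))) ?_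
  filter_upwards [Ioo_mem_nhdsLT_of_mem (Set.mem_Ioc.2 ⟨half_lt_self hr, le_refl r⟩)]
    with ρ hρ
  calc ENNReal.ofReal (C⁻¹ * ρ ^ α) ≤ μ (closedBall x ρ) :=
        (hAhlfors x hx ρ (lt_trans (half_pos hr) hρ.1)).1
    _ ≤ μ (ball x r) := measure_mono (closedBall_subset_ball hρ.2)

/-- A (C,α)-Ahlfors regular measure on ℝ (regularity holding for all radii) is
absolutely (2^α C², α)-decaying on ℝ: for any ball B of radius r centred in supp μ,
any y ∈ ℝ and any ε > 0, μ(B ∩ B(y,ε)) ≤ 2^α C² (ε/r)^α μ(B). -/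
theorem stmt1 (μ : Measure ℝ) (C α : ℝ) (hC : 1 < C) (hα : 0 < α)
    (hAhlfors : ∀ x ∈ msupp μ, ∀ ρ : ℝ, 0 < ρ →
      ENNReal.ofReal (C⁻¹ * ρ ^ α) ≤ μ (closedBall x ρ) ∧
      μ (closedBall x ρ) ≤ ENNReal.ofReal (C * ρ ^ α)) :
    ∀ x ∈ msupp μ, ∀ r : ℝ, 0 < r → ∀ y ε : ℝ, 0 < ε →
      μ (ball x r ∩ ball y ε) ≤
        ENNReal.ofReal (2 ^ α * C ^ 2 * (ε / r) ^ α) * μ (ball x r) := by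
  intro x hx r hr y ε hε
  have hC0 : (0:ℝ) < C := lt_trans one_pos hC
  rcases le_or_gt r (2 * ε) with hcase | hcase
  · -- trivial case: coefficient ≥ 1
    have h1 : (1:ℝ) ≤ 2 ^ α * C ^ 2 * (ε / r) ^ α := by
      have h2 : (1:ℝ) ≤ (2 * (ε / r)) ^ α := by
        apply Real.one_le_rpow _ hα.le
        rw [← mul_div_assoc, le_div_iff₀ hr]
        linarith
      have h3 : (2 * (ε / r)) ^ α = 2 ^ α * (ε / r) ^ α :=
        Real.mul_rpow (by norm_num) (by positivity)
      nlinarith [Real.rpow_nonneg (show (0:ℝ) ≤ 2^α * (ε/r)^α from by positivity) 1,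
        sq_nonneg C, Real.rpow_nonneg (show (0:ℝ) ≤ (ε/r) from by positivity) α,
        Real.rpow_nonneg (show (0:ℝ) ≤ 2 from by norm_num) α, h2, h3]
    calc μ (ball x r ∩ ball y ε) ≤ μ (ball x r) := measure_mono Set.inter_subset_left
      _ ≤ ENNReal.ofReal (2 ^ α * C ^ 2 * (ε / r) ^ α) * μ (ball x r) := by
        refine le_mul_of_one_le_left zero_le ?_
        rw [show (1:ENNReal) = ENNReal.ofReal 1 from (ENNReal.ofReal_one).symm]
        exact ENNReal.ofReal_le_ofReal h1
  · -- main case: 2ε < r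
    by_cases hS : (ball x r ∩ ball y ε ∩ msupp μ).Nonempty
    · obtain ⟨w, ⟨hwB, hwy⟩, hwsupp⟩ := hS
      have hsub : ball x r ∩ ball y ε ⊆ closedBall w (2 * ε) := by
        rintro z ⟨_, hz⟩
        rw [mem_closedBall]
        have := mem_ball.1 hz
        have := mem_ball.1 hwy
        calc dist z w ≤ dist z y + dist y w := dist_triangle _ _ _
          _ ≤ 2 * ε := by rw [dist_comm y w] at *; linarith
      have hup : μ (ball x r ∩ ball y ε) ≤ ENNReal.ofReal (C * (2 * ε) ^ α) :=
        le_trans (measure_mono hsub) (hAhlfors w hwsupp (2 * ε) (by linarith)).2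
      have hlow := ball_lower μ C α hC hα hAhlfors x hx r hr
      calc μ (ball x r ∩ ball y ε) ≤ ENNReal.ofReal (C * (2 * ε) ^ α) := hup
        _ = ENNReal.ofReal (2 ^ α * C ^ 2 * (ε / r) ^ α) * ENNReal.ofReal (C⁻¹ * r ^ α) := by
            rw [← ENNReal.ofReal_mul (by positivity)]
            congr 1
            have hr' : (0:ℝ) < r ^ α := Real.rpow_pos_of_pos hr α
            rw [Real.mul_rpow (by norm_num) hε.le, Real.div_rpow hε.le hr.le]
            field_simp
        _ ≤ ENNReal.ofReal (2 ^ α * C ^ 2 * (ε / r) ^ α) * μ (ball x r) :=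
            mul_le_mul_right hlow _
    · have : μ (ball x r ∩ ball y ε) = 0 := by
        have hsub : ball x r ∩ ball y ε ⊆ (msupp μ)ᶜ := by
          intro z hz hzs
          exact hS ⟨z, hz, hzs⟩
        exact le_antisymm (le_trans (measure_mono hsub) (msupp_compl_null μ).le) zero_le
      rw [this]
      exact zero_le
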